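/- If Φ : ℝ₊ → ℝ^{n×n} satisfies the matrix differential equation dΦ/dt = A(t)Φ(t), Φ(0) = I, with t ↦ A(t) continuous, then for any k ∈ {1,…,n} the k-th multiplicative compound satisfies d/dt (Φ(t))^{(k)} = (A(t))^{[k]} (Φ(t))^{(k)}. -/

import Mathlib

open Matrix

/-- The `k`-th multiplicative compound of a matrix. -/
noncomputable def mulCompound {R : Type*} [CommRing R] {n m : ℕ} (k : ℕ)
    (A : Matrix (Fin n) (Fin m) R) :
    Matrix {s : Finset (Fin n) // s.card = k} {s : Finset (Fin m) // s.card = k} R :=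
  fun α β => (A.submatrix (α.1.orderEmbOfFin α.2) (β.1.orderEmbOfFin β.2)).det

/-- The `k`-th additive compound: `A^{[k]} := (d/dt)(exp(At))^{(k)} |_{t=0}`. -/
noncomputable def addCompound {n : ℕ} (k : ℕ) (A : Matrix (Fin n) (Fin n) ℝ) :
    Matrix {s : Finset (Fin n) // s.card = k} {s : Finset (Fin n) // s.card = k} ℝ :=
  fun α β => deriv (fun t : ℝ => mulCompound k (NormedSpace.exp (t • A)) α β) 0

namespace MCompoundProof

open Finset NormedSpace

section CB
variable {k n : ℕ}

theorem image_orderEmbOfFin_univ (s : Finset (Fin n)) (h : s.card = k) :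
    Finset.univ.image (s.orderEmbOfFin h) = s := by
  ext x
  simp only [Finset.mem_image, Finset.mem_univ, true_and]
  constructor
  · rintro ⟨i, rfl⟩; exact s.orderEmbOfFin_mem h i
  · intro hx
    have : x ∈ Set.range (s.orderEmbOfFin h) := by
      rw [Finset.range_orderEmbOfFin]; exact hx
    obtain ⟨i, hi⟩ := this
    exact ⟨i, hi⟩

theorem image_comp_perm (s : Finset (Fin n)) (hs : s.card = k) (σ : Equiv.Perm (Fin k)) :
    Finset.univ.image ((s.orderEmbOfFin hs) ∘ σ) = s := by
  ext x
  simp only [Finset.mem_image, Finset.mem_univ, true_and, Function.comp_apply]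
  constructor
  · rintro ⟨i, rfl⟩; exact s.orderEmbOfFin_mem hs _
  · intro hx
    rw [← image_orderEmbOfFin_univ s hs] at hx
    obtain ⟨j, _, hj⟩ := Finset.mem_image.mp hx
    exact ⟨σ.symm j, by simp [hj]⟩

theorem cauchyBinet (P : Matrix (Fin k) (Fin n) ℝ) (Q : Matrix (Fin n) (Fin k) ℝ) :
    (P * Q).det = ∑ γ : {s : Finset (Fin n) // s.card = k},
      (P.submatrix id (γ.1.orderEmbOfFin γ.2)).det *
        (Q.submatrix (γ.1.orderEmbOfFin γ.2) id).det := by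
  classical
  have h1 : (P * Q).det
      = ∑ f : Fin k → Fin n, (∏ i, P i (f i)) * (Q.submatrix f id).det := by
    have hrows : (P * Q) = Matrix.of (fun i => ∑ l, P i l • Q l) := by
      ext i j
      simp [Matrix.mul_apply, Finset.sum_apply]
    rw [hrows]
    have this' : (Matrix.detRowAlternating (Matrix.of (fun i => ∑ l, P i l • Q l)
          : Matrix (Fin k) (Fin k) ℝ) : ℝ)
        = ∑ r : Fin k → Fin n, Matrix.detRowAlternating
            (Matrix.of (fun i => P i (r i) • Q (r i)) : Matrix (Fin k) (Fin k) ℝ) :=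
      (Matrix.detRowAlternating (n := Fin k) (R := ℝ)).toMultilinearMap.map_sum
        (g := fun i l => P i l • Q l)
    show Matrix.detRowAlternating (Matrix.of (fun i => ∑ l, P i l • Q l)
        : Matrix (Fin k) (Fin k) ℝ) = _
    rw [this']
    refine Finset.sum_congr rfl fun f _ => ?_
    have := (Matrix.detRowAlternating (n := Fin k) (R := ℝ)).toMultilinearMap.map_smul_univ
      (fun i => P i (f i)) (fun i => Q (f i))
    rw [show (Matrix.detRowAlternating (Matrix.of (fun i => P i (f i) • Q (f i))
        : Matrix (Fin k) (Fin k) ℝ) : ℝ)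
      = (∏ i, P i (f i)) • Matrix.detRowAlternating
          (Matrix.of (fun i => Q (f i)) : Matrix (Fin k) (Fin k) ℝ) from this]
    rw [smul_eq_mul]
    rfl
  rw [h1, ← Finset.sum_filter_add_sum_filter_not Finset.univ (fun f => Function.Injective f)]
  have h2 : ∑ f ∈ Finset.univ.filter (fun f => ¬ Function.Injective f),
      (∏ i, P i (f i)) * (Q.submatrix f id).det = 0 := by
    refine Finset.sum_eq_zero fun f hf => ?_
    simp only [Finset.mem_filter] at hf
    obtain ⟨i, j, hij, hne⟩ := Function.not_injective_iff.mp hf.2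
    have : (Q.submatrix f id).det = 0 :=
      Matrix.det_zero_of_row_eq hne (by ext c; simp [hij])
    rw [this, mul_zero]
  rw [h2, add_zero]
  have h3 : ∀ γ : {s : Finset (Fin n) // s.card = k},
      (P.submatrix id (γ.1.orderEmbOfFin γ.2)).det * (Q.submatrix (γ.1.orderEmbOfFin γ.2) id).det
      = ∑ σ : Equiv.Perm (Fin k),
          (∏ i, P i (γ.1.orderEmbOfFin γ.2 (σ i))) *
            (Q.submatrix (γ.1.orderEmbOfFin γ.2 ∘ σ) id).det := by
    intro γ
    have hP : (P.submatrix id (γ.1.orderEmbOfFin γ.2)).det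
        = ∑ σ : Equiv.Perm (Fin k), Equiv.Perm.sign σ •
            ∏ i, P i (γ.1.orderEmbOfFin γ.2 (σ i)) := by
      rw [← Matrix.det_transpose, Matrix.det_apply]
      rfl
    have hQ : ∀ σ : Equiv.Perm (Fin k), (Q.submatrix (γ.1.orderEmbOfFin γ.2 ∘ σ) id).det
        = Equiv.Perm.sign σ • (Q.submatrix (γ.1.orderEmbOfFin γ.2) id).det := by
      intro σ
      have : Q.submatrix (γ.1.orderEmbOfFin γ.2 ∘ σ) id
          = (Q.submatrix (γ.1.orderEmbOfFin γ.2) id).submatrix σ id := by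
        simp [Matrix.submatrix_submatrix]
      rw [this, Matrix.det_permute]
      simp [Units.smul_def]
    rw [hP, Finset.sum_mul]
    refine Finset.sum_congr rfl fun σ _ => ?_
    rw [hQ σ]
    simp only [Units.smul_def, zsmul_eq_mul, smul_eq_mul]
    ring
  rw [Finset.sum_congr rfl fun γ _ => h3 γ]
  have h4 : ∑ p : ({s : Finset (Fin n) // s.card = k} × Equiv.Perm (Fin k)),
      (∏ i, P i (p.1.1.orderEmbOfFin p.1.2 (p.2 i))) *
        (Q.submatrix (p.1.1.orderEmbOfFin p.1.2 ∘ p.2) id).det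
      = ∑ γ : {s : Finset (Fin n) // s.card = k}, ∑ σ : Equiv.Perm (Fin k),
      (∏ i, P i (γ.1.orderEmbOfFin γ.2 (σ i))) *
        (Q.submatrix (γ.1.orderEmbOfFin γ.2 ∘ σ) id).det := Fintype.sum_prod_type _
  rw [← h4]
  refine (Finset.sum_bij
    (fun (p : {s : Finset (Fin n) // s.card = k} × Equiv.Perm (Fin k)) _ =>
      (p.1.1.orderEmbOfFin p.1.2) ∘ p.2) ?_ ?_ ?_ ?_).symm
  · intro p _
    simp only [Finset.mem_filter, Finset.mem_univ, true_and]
    exact ((p.1.1.orderEmbOfFin p.1.2).injective).comp p.2.injective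
  · rintro ⟨⟨s1, hs1⟩, σ1⟩ _ ⟨⟨s2, hs2⟩, σ2⟩ _ h
    simp only at h
    have him : s1 = s2 := by
      rw [← image_comp_perm s1 hs1 σ1, ← image_comp_perm s2 hs2 σ2, h]
    subst him
    have hσ : σ1 = σ2 := by
      refine Equiv.ext fun i => (s1.orderEmbOfFin hs1).injective ?_
      exact congrFun h i
    subst hσ
    rfl
  · intro f hf
    simp only [Finset.mem_filter, Finset.mem_univ, true_and] at hf
    classical
    set s := Finset.univ.image f with hs_def
    have hs : s.card = k := by
      rw [hs_def, Finset.card_image_of_injective _ hf]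
      simp
    have hmem : ∀ i, f i ∈ s := fun i => Finset.mem_image.mpr ⟨i, Finset.mem_univ i, rfl⟩
    set τ : Fin k → Fin k := fun i => (s.orderIsoOfFin hs).symm ⟨f i, hmem i⟩ with hτ_def
    have hτinj : Function.Injective τ := by
      intro i j hij
      apply hf
      have := congrArg (fun z => ((s.orderIsoOfFin hs) z : Fin n)) hij
      simpa [hτ_def, OrderIso.apply_symm_apply] using this
    refine ⟨(⟨s, hs⟩, Equiv.ofBijective τ (Finite.injective_iff_bijective.mp hτinj)),
      Finset.mem_univ _, ?_⟩
    funext i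
    show s.orderEmbOfFin hs (τ i) = f i
    rw [← Finset.coe_orderIsoOfFin_apply]
    simp [hτ_def, OrderIso.apply_symm_apply]
  · exact fun a ha => rfl

end CB

section Deriv
variable {k n : ℕ}

theorem hasDerivWithinAt_det_curve {M : ℝ → Matrix (Fin k) (Fin k) ℝ}
    {N : Matrix (Fin k) (Fin k) ℝ} {S : Set ℝ} {t : ℝ}
    (h : ∀ i j, HasDerivWithinAt (fun s => M s i j) (N i j) S t) :
    HasDerivWithinAt (fun s => (M s).det)
      (∑ r : Fin k, ((M t).updateRow r (N r)).det) S t := by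
  classical
  have hfun : (fun s => (M s).det)
      = fun s => ∑ σ : Equiv.Perm (Fin k), (Equiv.Perm.sign σ : ℝ) * ∏ i, M s (σ i) i := by
    funext s
    rw [Matrix.det_apply]
    simp [Units.smul_def]
  rw [hfun]
  have hterm : ∀ σ : Equiv.Perm (Fin k),
      HasDerivWithinAt (fun s => (Equiv.Perm.sign σ : ℝ) * ∏ i, M s (σ i) i)
        ((Equiv.Perm.sign σ : ℝ) *
          ∑ i, (∏ j ∈ Finset.univ.erase i, M t (σ j) j) * N (σ i) i) S t := by
    intro σ
    have hp : HasDerivWithinAt (fun s => ∏ i, M s (σ i) i)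
        (∑ i, (∏ j ∈ Finset.univ.erase i, M t (σ j) j) • N (σ i) i) S t :=
      HasDerivWithinAt.fun_finsetProd (fun i _ => h (σ i) i)
    have := hp.const_mul (Equiv.Perm.sign σ : ℝ)
    simpa [smul_eq_mul] using this
  have hsum := HasDerivWithinAt.fun_sum (u := Finset.univ)
    (fun σ (_ : σ ∈ Finset.univ) => hterm σ)
  refine hsum.congr_deriv (Eq.symm ?_)
  have hval : ∀ r : Fin k, ((M t).updateRow r (N r)).det
      = ∑ σ : Equiv.Perm (Fin k), (Equiv.Perm.sign σ : ℝ) *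
          (N (σ (σ.symm r)) (σ.symm r) * ∏ j ∈ Finset.univ.erase (σ.symm r), M t (σ j) j) := by
    intro r
    rw [Matrix.det_apply]
    refine Finset.sum_congr rfl fun σ _ => ?_
    rw [Units.smul_def, zsmul_eq_mul]
    congr 1
    rw [← Finset.mul_prod_erase Finset.univ _ (Finset.mem_univ (σ.symm r))]
    congr 1
    · rw [Matrix.updateRow_apply]
      simp
    · refine Finset.prod_congr rfl fun j hj => ?_
      rw [Matrix.updateRow_apply, if_neg]
      intro hc
      apply Finset.ne_of_mem_erase hj
      apply σ.injective
      rw [hc]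
      simp
  simp only [hval]
  rw [Finset.sum_comm]
  refine Finset.sum_congr rfl fun σ _ => ?_
  rw [← Finset.mul_sum]
  congr 1
  rw [show (∑ i, N (σ (σ.symm i)) (σ.symm i) * ∏ j ∈ Finset.univ.erase (σ.symm i), M t (σ j) j)
      = ∑ i, N (σ (σ.symm (σ i))) (σ.symm (σ i)) *
          ∏ j ∈ Finset.univ.erase (σ.symm (σ i)), M t (σ j) j from
    (Equiv.sum_comp σ (fun r => N (σ (σ.symm r)) (σ.symm r) *
      ∏ j ∈ Finset.univ.erase (σ.symm r), M t (σ j) j)).symm]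
  simp only [Equiv.symm_apply_apply]
  exact Finset.sum_congr rfl fun i _ => mul_comm _ _

theorem hasDerivAt_det_curve {M : ℝ → Matrix (Fin k) (Fin k) ℝ}
    {N : Matrix (Fin k) (Fin k) ℝ} {t : ℝ}
    (h : ∀ i j, HasDerivAt (fun s => M s i j) (N i j) t) :
    HasDerivAt (fun s => (M s).det)
      (∑ r : Fin k, ((M t).updateRow r (N r)).det) t := by
  rw [← hasDerivWithinAt_univ]
  exact hasDerivWithinAt_det_curve (fun i j => (h i j).hasDerivWithinAt)

end Deriv

section ExpPart
attribute [local instance] Matrix.linftyOpNormedRing Matrix.linftyOpNormedAlgebra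

variable {n k : ℕ}

theorem matrix_entry_hasDerivAt {f : ℝ → Matrix (Fin n) (Fin n) ℝ}
    {f' : Matrix (Fin n) (Fin n) ℝ} {t : ℝ} (hf : HasDerivAt f f' t) (i j : Fin n) :
    HasDerivAt (fun u => f u i j) (f' i j) t := by
  let L : Matrix (Fin n) (Fin n) ℝ →ₗ[ℝ] ℝ :=
    { toFun := fun M => M i j, map_add' := fun _ _ => rfl, map_smul' := fun _ _ => rfl }
  have := (LinearMap.toContinuousLinearMap L).hasFDerivAt.comp_hasDerivAt t hf
  exact this

theorem exp_mul_entry_hasDerivAt (B M : Matrix (Fin n) (Fin n) ℝ) (i j : Fin n) :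
    HasDerivAt (fun u : ℝ => (exp (u • B) * M) i j) ((B * M) i j) 0 := by
  have h1 : HasDerivAt (fun u : ℝ => exp (u • B) * M) (B * exp ((0:ℝ) • B) * M) 0 :=
    (hasDerivAt_exp_smul_const' (𝕂 := ℝ) B 0).mul_const M
  have h2 : B * exp ((0:ℝ) • B) * M = B * M := by
    rw [zero_smul, exp_zero, mul_one]
  rw [h2] at h1
  exact matrix_entry_hasDerivAt h1 i j

/-- derivative at `0` of a minor of `exp (s•B) * M`. -/
theorem hasDerivAt_minor_exp (B M : Matrix (Fin n) (Fin n) ℝ) (a b : Fin k → Fin n) :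
    HasDerivAt (fun s : ℝ => ((exp (s • B) * M).submatrix a b).det)
      (∑ r : Fin k, ((M.submatrix a b).updateRow r (((B * M).submatrix a b) r)).det) 0 := by
  have h := hasDerivAt_det_curve (t := (0:ℝ))
    (M := fun s => (exp (s • B) * M).submatrix a b)
    (N := (B * M).submatrix a b)
    (fun i j => exp_mul_entry_hasDerivAt B M (a i) (b j))
  have h0 : exp ((0:ℝ) • B) * M = M := by rw [zero_smul, exp_zero, one_mul]
  simpa only [h0] using h

end ExpPart

section AddC
variable {n k : ℕ}

theorem addCompound_eq (B : Matrix (Fin n) (Fin n) ℝ)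
    (α β : {s : Finset (Fin n) // s.card = k}) :
    addCompound k B α β = ∑ r : Fin k,
      ((((1:Matrix (Fin n) (Fin n) ℝ)).submatrix (α.1.orderEmbOfFin α.2) (β.1.orderEmbOfFin β.2)).updateRow r
        ((B.submatrix (α.1.orderEmbOfFin α.2) (β.1.orderEmbOfFin β.2)) r)).det := by
  have h := hasDerivAt_minor_exp B 1 (α.1.orderEmbOfFin α.2) (β.1.orderEmbOfFin β.2)
  simp only [mul_one] at h
  exact h.deriv

/-- key algebraic identity -/
theorem key_identity (B M : Matrix (Fin n) (Fin n) ℝ)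
    (α β : {s : Finset (Fin n) // s.card = k}) :
    ∑ r : Fin k, (((M.submatrix (α.1.orderEmbOfFin α.2) (β.1.orderEmbOfFin β.2)).updateRow r
        (((B * M).submatrix (α.1.orderEmbOfFin α.2) (β.1.orderEmbOfFin β.2)) r)).det)
    = ∑ γ : {s : Finset (Fin n) // s.card = k},
        (∑ r : Fin k, ((((1:Matrix (Fin n) (Fin n) ℝ)).submatrix (α.1.orderEmbOfFin α.2)
            (γ.1.orderEmbOfFin γ.2)).updateRow r
          ((B.submatrix (α.1.orderEmbOfFin α.2) (γ.1.orderEmbOfFin γ.2)) r)).det) *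
        (M.submatrix (γ.1.orderEmbOfFin γ.2) (β.1.orderEmbOfFin β.2)).det := by
  set a := α.1.orderEmbOfFin α.2
  set b := β.1.orderEmbOfFin β.2
  have hL := hasDerivAt_minor_exp (k := k) B M a b
  have hfun : (fun s : ℝ => (((NormedSpace.exp (s • B)) * M).submatrix a b).det)
      = fun s : ℝ => ∑ γ : {s : Finset (Fin n) // s.card = k},
          (((NormedSpace.exp (s • B)).submatrix a (γ.1.orderEmbOfFin γ.2)).det) *
          ((M.submatrix (γ.1.orderEmbOfFin γ.2) b).det) := by
    funext s
    have hsplit : ((NormedSpace.exp (s • B)) * M).submatrix a b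
        = ((NormedSpace.exp (s • B)).submatrix a id) * (M.submatrix id b) := by
      ext i j
      simp [Matrix.mul_apply]
    rw [hsplit, cauchyBinet]
    refine Finset.sum_congr rfl fun γ _ => ?_
    rw [Matrix.submatrix_submatrix, Matrix.submatrix_submatrix]
    simp
  have hR : HasDerivAt (fun s : ℝ => (((NormedSpace.exp (s • B)) * M).submatrix a b).det)
      (∑ γ : {s : Finset (Fin n) // s.card = k},
        (∑ r : Fin k, ((((1:Matrix (Fin n) (Fin n) ℝ)).submatrix a
            (γ.1.orderEmbOfFin γ.2)).updateRow r
          ((B.submatrix a (γ.1.orderEmbOfFin γ.2)) r)).det) *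
        (M.submatrix (γ.1.orderEmbOfFin γ.2) b).det) 0 := by
    rw [hfun]
    refine HasDerivAt.fun_sum (fun γ _ => ?_)
    have hγ := hasDerivAt_minor_exp B 1 a (γ.1.orderEmbOfFin γ.2)
    simp only [mul_one] at hγ
    exact hγ.mul_const _
  exact hL.unique hR

end AddC

end MCompoundProof

theorem mulCompound_ode {n : ℕ} (k : ℕ) (hk : 1 ≤ k) (hkn : k ≤ n)
    (A Φ : ℝ → Matrix (Fin n) (Fin n) ℝ)
    (hA : ∀ i j, Continuous fun t => A t i j)
    (hΦ0 : Φ 0 = 1)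
    (hΦ : ∀ i j, ∀ t ∈ Set.Ici (0:ℝ),
      HasDerivWithinAt (fun s => Φ s i j) ((A t * Φ t) i j) (Set.Ici 0) t) :
    ∀ α β, ∀ t ∈ Set.Ici (0:ℝ),
      HasDerivWithinAt (fun s => mulCompound k (Φ s) α β)
        ((addCompound k (A t) * mulCompound k (Φ t)) α β) (Set.Ici 0) t := by
  intro α β t ht
  have hD := MCompoundProof.hasDerivWithinAt_det_curve (S := Set.Ici 0) (t := t)
    (M := fun s => (Φ s).submatrix (α.1.orderEmbOfFin α.2) (β.1.orderEmbOfFin β.2))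
    (N := (A t * Φ t).submatrix (α.1.orderEmbOfFin α.2) (β.1.orderEmbOfFin β.2))
    (fun i j => hΦ _ _ t ht)
  have hval : (addCompound k (A t) * mulCompound k (Φ t)) α β
      = ∑ r : Fin k, ((((Φ t).submatrix (α.1.orderEmbOfFin α.2)
          (β.1.orderEmbOfFin β.2)).updateRow r
        (((A t * Φ t).submatrix (α.1.orderEmbOfFin α.2) (β.1.orderEmbOfFin β.2)) r)).det) := by
    rw [Matrix.mul_apply]
    rw [MCompoundProof.key_identity (A t) (Φ t) α β]
    refine Finset.sum_congr rfl fun γ _ => ?_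
    rw [MCompoundProof.addCompound_eq]
    rfl
  rw [hval]
  exact hD
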